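/- Let 1/2 < g < 3/2 with g ≠ 1, and let μ > 0 with J_{1/2−g}(μ) ≠ 0. Then ∫₀¹ G_N(x,x;μ²) dx = J_{3/2−g}(μ) / (2μ J_{1/2−g}(μ)), where G_N(x,x;μ²) = γ_N(μ) · x · ( −J_{g−1/2}(μ) J_{1/2−g}(μx)² + J_{1/2−g}(μ) J_{1/2−g}(μx) J_{g−1/2}(μx) ) and γ_N(μ) = π / (2 cos(gπ) J_{1/2−g}(μ)). -/

import Mathlib

open MeasureTheory Set

/-- Bessel function of the first kind of order `ν`, defined by its power series. -/
noncomputable def besselJ (ν x : ℝ) : ℝ :=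
  ∑' m : ℕ, ((-1 : ℝ) ^ m / (m.factorial * Real.Gamma (m + ν + 1))) *
    (x / 2) ^ (2 * m) * (x / 2) ^ ν

namespace BesselAux

noncomputable def bc (ν : ℝ) (m : ℕ) : ℝ :=
  (-1 : ℝ) ^ m / (m.factorial * Real.Gamma (m + ν + 1))

noncomputable def h (ν z : ℝ) : ℝ := ∑' m : ℕ, bc ν m * (z / 2) ^ (2 * m)

lemma besselJ_eq (ν x : ℝ) : besselJ ν x = h ν x * (x / 2) ^ ν := by
  rw [besselJ, h, ← tsum_mul_right]
  rfl

lemma gamma_pos (ν : ℝ) (hν : -1 < ν) (m : ℕ) : 0 < Real.Gamma (m + ν + 1) :=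
  Real.Gamma_pos_of_pos (by have : (0:ℝ) ≤ m := Nat.cast_nonneg m; linarith)

lemma bc_pos_denom (ν : ℝ) (hν : -1 < ν) (m : ℕ) :
    (0:ℝ) < m.factorial * Real.Gamma (m + ν + 1) :=
  mul_pos (by exact_mod_cast m.factorial_pos) (gamma_pos ν hν m)

lemma abs_bc (ν : ℝ) (hν : -1 < ν) (m : ℕ) :
    |bc ν m| = 1 / (m.factorial * Real.Gamma (m + ν + 1)) := by
  rw [bc, abs_div, abs_pow, abs_neg, abs_one, one_pow, abs_of_pos (bc_pos_denom ν hν m)]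

lemma bc_succ (ν : ℝ) (hν : -1 < ν) (m : ℕ) :
    bc ν (m + 1) * ((m : ℝ) + 1) * ((m : ℝ) + ν + 1) = - bc ν m := by
  have hg : (0:ℝ) < (m:ℝ) + ν + 1 := by have : (0:ℝ) ≤ m := Nat.cast_nonneg m; linarith
  have h1 : Real.Gamma ((m:ℝ) + 1 + ν + 1) = ((m:ℝ) + ν + 1) * Real.Gamma ((m:ℝ) + ν + 1) := by
    rw [show (m:ℝ) + 1 + ν + 1 = ((m:ℝ) + ν + 1) + 1 by ring, Real.Gamma_add_one hg.ne']
  have h2 := (gamma_pos ν hν m).ne'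
  have h3 : ((m.factorial : ℝ)) ≠ 0 := by exact_mod_cast m.factorial_ne_zero
  unfold bc
  push_cast [Nat.factorial_succ]
  rw [h1, pow_succ]
  field_simp

lemma abs_bc_succ (ν : ℝ) (hν : -1 < ν) (m : ℕ) :
    |bc ν (m + 1)| * (((m:ℝ) + 1) * ((m:ℝ) + ν + 1)) = |bc ν m| := by
  have hg : (0:ℝ) < (m:ℝ) + ν + 1 := by have : (0:ℝ) ≤ m := Nat.cast_nonneg m; linarith
  have := congrArg abs (bc_succ ν hν m)
  rw [abs_neg, abs_mul, abs_mul, abs_of_pos (by positivity : (0:ℝ) < (m:ℝ)+1),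
    abs_of_pos hg] at this
  rw [← this]; ring

lemma summable_master (ν : ℝ) (hν : -1 < ν) (t : ℝ) (ht : 0 ≤ t) :
    Summable (fun m : ℕ => |bc ν m| * ((m:ℝ) + 1) * t ^ m) := by
  apply summable_of_ratio_norm_eventually_le (r := 1/2) (by norm_num)
  filter_upwards [Filter.eventually_ge_atTop (⌈2*t⌉₊ + 1)] with m hm
  have hm1 : (1:ℝ) ≤ m := by
    have : (1:ℕ) ≤ m := le_trans (Nat.le_add_left 1 _) hm
    exact_mod_cast this
  have h2t : 2*t ≤ (m:ℝ) := by
    calc 2*t ≤ (⌈2*t⌉₊ : ℝ) := Nat.le_ceil _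
    _ ≤ (m:ℝ) := by exact_mod_cast le_trans (Nat.le_add_right _ 1) hm
  have hbnn : (0:ℝ) ≤ |bc ν (m+1)| := abs_nonneg _
  have htm : (0:ℝ) ≤ t ^ m := pow_nonneg ht m
  have hf : ∀ k : ℕ, 0 ≤ |bc ν k| * ((k:ℝ) + 1) * t ^ k := fun k =>
    mul_nonneg (mul_nonneg (abs_nonneg _) (by positivity)) (pow_nonneg ht k)
  rw [Real.norm_eq_abs, Real.norm_eq_abs, abs_of_nonneg (hf _), abs_of_nonneg (hf _)]
  rw [← abs_bc_succ ν hν m]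
  push_cast
  rw [pow_succ]
  nlinarith [mul_nonneg (mul_nonneg hbnn htm)
      (show (0:ℝ) ≤ ((m:ℝ)+1)^2*((m:ℝ)+ν) by nlinarith),
    mul_nonneg (mul_nonneg hbnn htm)
      (show (0:ℝ) ≤ ((m:ℝ)+2)*((m:ℝ)-2*t) by nlinarith),
    mul_nonneg hbnn htm]
lemma norm_term (ν : ℝ) (z : ℝ) (m : ℕ) :
    ‖bc ν m * (z / 2) ^ (2 * m)‖ = |bc ν m| * ((z/2)^2) ^ m := by
  rw [Real.norm_eq_abs, abs_mul, abs_pow, pow_mul, sq_abs]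

lemma summable_h (ν : ℝ) (hν : -1 < ν) (z : ℝ) :
    Summable (fun m : ℕ => bc ν m * (z / 2) ^ (2 * m)) := by
  apply Summable.of_norm_bounded (summable_master ν hν ((z/2)^2) (sq_nonneg _))
  intro m
  rw [norm_term]
  have h1 : (1:ℝ) ≤ (m:ℝ) + 1 := by have : (0:ℝ) ≤ m := Nat.cast_nonneg m; linarith
  have := pow_nonneg (sq_nonneg (z/2)) m
  nlinarith [abs_nonneg (bc ν m), mul_nonneg (abs_nonneg (bc ν m)) this]

lemma bc_shift (ν : ℝ) (hν : -1 < ν) (k : ℕ) :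
    bc ν (k + 1) * ((k:ℝ) + 1) = - bc (ν + 1) k := by
  have h2 : Real.Gamma ((k:ℝ) + (ν+1) + 1) ≠ 0 := (gamma_pos (ν+1) (by linarith) k).ne'
  have h3 : ((k.factorial : ℝ)) ≠ 0 := by exact_mod_cast k.factorial_ne_zero
  unfold bc
  push_cast [Nat.factorial_succ]
  rw [show (k:ℝ) + 1 + ν + 1 = (k:ℝ) + (ν+1) + 1 by ring, pow_succ]
  field_simp

/-- derivative series term -/
noncomputable def dterm (ν : ℝ) (m : ℕ) (y : ℝ) : ℝ :=
  bc ν m * (((2*m : ℕ) : ℝ) * (y/2) ^ (2*m - 1) * (2:ℝ)⁻¹)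

lemma dterm_hasDeriv (ν : ℝ) (m : ℕ) (y : ℝ) :
    HasDerivAt (fun y => bc ν m * (y/2) ^ (2*m)) (dterm ν m y) y := by
  have h1 : HasDerivAt (fun y : ℝ => y/2) ((1:ℝ)/2) y := (hasDerivAt_id y).div_const 2
  have h2 := (h1.pow (2*m)).const_mul (bc ν m)
  simpa [dterm, mul_comm, mul_assoc, mul_left_comm, one_div] using h2

lemma dterm_bound (ν : ℝ) (m : ℕ) (y R : ℝ) (hR : 1 ≤ R) (hy : |y| ≤ R) :
    ‖dterm ν m y‖ ≤ |bc ν m| * ((m:ℝ) + 1) * ((R/2)^2) ^ m * (2/R) := by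
  have hR0 : (0:ℝ) < R := lt_of_lt_of_le one_pos hR
  rcases Nat.eq_zero_or_pos m with hm | hm
  · subst hm
    simp only [dterm, Nat.mul_zero, Nat.cast_zero, zero_mul, mul_zero, zero_mul,
      Nat.zero_sub, pow_zero, norm_zero]
    positivity
  · have hyd : |y/2| ≤ R/2 := by
      rw [abs_div, abs_two]
      linarith
    have hpow : |(y/2) ^ (2*m - 1)| ≤ (R/2) ^ (2*m-1) := by
      rw [abs_pow]
      exact pow_le_pow_left₀ (abs_nonneg _) hyd _
    have hpe : (R/2) ^ (2*m-1) * (R/2) = ((R/2)^2) ^ m := by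
      rw [← pow_succ, ← pow_mul]
      congr 1
      omega
    rw [dterm, Real.norm_eq_abs, abs_mul, abs_mul, abs_mul]
    have h2m : |(((2*m:ℕ)):ℝ)| = 2*(m:ℝ) := by
      rw [abs_of_nonneg] <;> push_cast <;> [skip; positivity]
      norm_num
    rw [h2m, abs_inv, abs_two]
    calc |bc ν m| * (2*(m:ℝ) * |(y/2)^(2*m-1)| * 2⁻¹)
        = |bc ν m| * ((m:ℝ) * |(y/2)^(2*m-1)|) := by ring
      _ ≤ |bc ν m| * (((m:ℝ)+1) * ((R/2)^(2*m-1))) := by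
          apply mul_le_mul_of_nonneg_left ?_ (abs_nonneg _)
          have hm1 : (0:ℝ) ≤ (m:ℝ) := Nat.cast_nonneg m
          have := abs_nonneg ((y/2)^(2*m-1))
          have hRp : (0:ℝ) ≤ (R/2)^(2*m-1) := by positivity
          nlinarith
      _ = |bc ν m| * ((m:ℝ)+1) * ((R/2)^(2*m-1) * (R/2)) * (2/R) := by
          field_simp
      _ = |bc ν m| * ((m:ℝ)+1) * ((R/2)^2) ^ m * (2/R) := by rw [hpe]

lemma summable_dterm (ν : ℝ) (hν : -1 < ν) (z : ℝ) :
    Summable (fun m => dterm ν m z) := by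
  set R := |z| + 1 with hRdef
  have hR : 1 ≤ R := by have := abs_nonneg z; linarith [hRdef]
  apply Summable.of_norm_bounded
    (((summable_master ν hν ((R/2)^2) (sq_nonneg _)).mul_right (2/R)))
  intro m
  exact dterm_bound ν m z R hR (by rw [hRdef]; have := abs_nonneg z; linarith)

lemma hasDerivAt_h (ν : ℝ) (hν : -1 < ν) (z : ℝ) :
    HasDerivAt (h ν) (-(z/2) * h (ν+1) z) z := by
  set R := |z| + 1 with hRdef
  have hR : 1 ≤ R := by have := abs_nonneg z; linarith [hRdef]
  have hz : z ∈ Metric.ball (0:ℝ) R := by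
    simp [hRdef, Metric.mem_ball, Real.dist_eq]
  have key := hasDerivAt_tsum_of_isPreconnected
    (u := fun m => |bc ν m| * ((m:ℝ) + 1) * ((R/2)^2) ^ m * (2/R))
    (g := fun m y => bc ν m * (y/2) ^ (2*m)) (g' := fun m y => dterm ν m y)
    (((summable_master ν hν ((R/2)^2) (sq_nonneg _)).mul_right (2/R)))
    Metric.isOpen_ball ((convex_ball (0:ℝ) R).isPreconnected)
    (fun m y _ => dterm_hasDeriv ν m y)
    (fun m y hy => dterm_bound ν m y R hR
      (by rw [Metric.mem_ball, Real.dist_eq, sub_zero] at hy; exact hy.le))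
    hz (summable_h ν hν z) hz
  have hsum := summable_dterm ν hν z
  have hshift : (∑' m, dterm ν m z) = -(z/2) * h (ν+1) z := by
    rw [Summable.tsum_eq_zero_add hsum]
    have h0 : dterm ν 0 z = 0 := by simp [dterm]
    rw [h0, zero_add]
    have hterm : ∀ k : ℕ, dterm ν (k+1) z
        = (bc (ν+1) k * (z/2) ^ (2*k)) * (-(z/2)) := by
      intro k
      have e1 : 2*(k+1) - 1 = 2*k + 1 := by omega
      rw [dterm, e1, pow_succ]
      have e2 : (((2*(k+1) : ℕ)):ℝ) = 2*((k:ℝ)+1) := by push_cast; ring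
      rw [e2]
      have hbs := bc_shift ν hν k
      linear_combination ((z/2)^(2*k) * (z/2)) * hbs
    rw [tsum_congr hterm, tsum_mul_right, h]
    ring
  rw [hshift] at key
  exact key

lemma h_zero (σ : ℝ) : h σ 0 = 1 / Real.Gamma (σ + 1) := by
  rw [h, tsum_eq_single 0]
  · norm_num [bc]
  · intro m hm
    have : (2*m) ≠ 0 := by omega
    simp [this, zero_pow]

lemma continuous_h (ν : ℝ) (hν : -1 < ν) : Continuous (h ν) := by
  have hd : Differentiable ℝ (h ν) := fun z => (hasDerivAt_h ν hν z).differentiableAt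
  exact hd.continuous

lemma bc_rec (ν : ℝ) (hν : 0 < ν) (k : ℕ) :
    bc (ν-1) (k+1) + bc (ν+1) k = ν * bc ν (k+1) := by
  have hg : (0:ℝ) < (k:ℝ) + ν + 1 := by have : (0:ℝ) ≤ k := Nat.cast_nonneg k; linarith
  have hΓ : Real.Gamma ((k:ℝ) + ν + 1 + 1) = ((k:ℝ)+ν+1) * Real.Gamma ((k:ℝ)+ν+1) :=
    Real.Gamma_add_one hg.ne'
  have hΓpos : (0:ℝ) < Real.Gamma ((k:ℝ)+ν+1) := Real.Gamma_pos_of_pos hg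
  have h3 : ((k.factorial:ℝ)) ≠ 0 := by exact_mod_cast k.factorial_ne_zero
  unfold bc
  push_cast [Nat.factorial_succ]
  rw [show (k:ℝ) + 1 + (ν-1) + 1 = (k:ℝ) + ν + 1 by ring,
      show (k:ℝ) + (ν+1) + 1 = (k:ℝ) + ν + 1 + 1 by ring,
      show (k:ℝ) + 1 + ν + 1 = (k:ℝ) + ν + 1 + 1 by ring, hΓ, pow_succ]
  field_simp
  ring

lemma bc_rec_zero (ν : ℝ) (hν : 0 < ν) : bc (ν-1) 0 = ν * bc ν 0 := by
  have hΓpos : (0:ℝ) < Real.Gamma ν := Real.Gamma_pos_of_pos hν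
  unfold bc
  simp only [pow_zero, Nat.factorial_zero, Nat.cast_zero, Nat.cast_one, zero_add, one_mul]
  rw [show ν - 1 + 1 = ν by ring, Real.Gamma_add_one hν.ne']
  field_simp

lemma h_rec (ν : ℝ) (hν : 0 < ν) (z : ℝ) :
    h (ν-1) z + (z/2)^2 * h (ν+1) z = ν * h ν z := by
  have hs1 := summable_h (ν-1) (by linarith) z
  have hs2 := summable_h (ν+1) (by linarith) z
  have hs0 := summable_h ν (by linarith) z
  have tail : (∑' k : ℕ, bc (ν-1) (k+1) * (z/2)^(2*(k+1)))
      + (∑' k : ℕ, (z/2)^2 * (bc (ν+1) k * (z/2)^(2*k)))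
      = ∑' k : ℕ, ν * (bc ν (k+1) * (z/2)^(2*(k+1))) := by
    rw [← Summable.tsum_add ((summable_nat_add_iff 1).mpr hs1) (hs2.mul_left _)]
    apply tsum_congr; intro k
    linear_combination ((z/2)^(2*(k+1))) * bc_rec ν hν k
  calc h (ν-1) z + (z/2)^2 * h (ν+1) z
      = (bc (ν-1) 0 * (z/2)^(2*0) + ∑' k : ℕ, bc (ν-1) (k+1) * (z/2)^(2*(k+1)))
        + ∑' k : ℕ, (z/2)^2 * (bc (ν+1) k * (z/2)^(2*k)) := by
        rw [h, h, Summable.tsum_eq_zero_add hs1, ← tsum_mul_left]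
    _ = ν * (bc ν 0 * (z/2)^(2*0)) + ∑' k : ℕ, ν * (bc ν (k+1) * (z/2)^(2*(k+1))) := by
        rw [add_assoc, tail, bc_rec_zero ν hν]
        ring
    _ = ν * h ν z := by
        rw [h, Summable.tsum_eq_zero_add hs0, mul_add, ← tsum_mul_left]

lemma wronskian (ν : ℝ) (h0 : 0 < ν) (h1 : ν < 1) (z : ℝ) :
    2*ν*(h ν z * h (-ν) z) + (z^2/2)*(h ν z * h (1-ν) z - h (ν+1) z * h (-ν) z)
      = 2 * Real.sin (Real.pi * ν) / Real.pi := by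
  have hQ : ∀ t : ℝ, HasDerivAt (fun z => 2*ν*(h ν z * h (-ν) z)
      + (z^2/2)*(h ν z * h (1-ν) z - h (ν+1) z * h (-ν) z)) 0 t := by
    intro t
    have Hq := hasDerivAt_h ν (by linarith) t
    have Hp := hasDerivAt_h (-ν) (by linarith) t
    have Hr := hasDerivAt_h (1-ν) (by linarith) t
    have Hs := hasDerivAt_h (ν+1) (by linarith) t
    rw [show -ν + 1 = 1-ν by ring] at Hp
    rw [show (1-ν) + 1 = 2-ν by ring] at Hr
    rw [show ν + 1 + 1 = ν+2 by ring] at Hs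
    have rec1 : h (-ν) t + (t/2)^2 * h (2-ν) t = (1-ν) * h (1-ν) t := by
      have := h_rec (1-ν) (by linarith) t
      rw [show 1-ν-1 = -ν by ring, show 1-ν+1 = 2-ν by ring] at this
      exact this
    have rec2 : h ν t + (t/2)^2 * h (ν+2) t = (ν+1) * h (ν+1) t := by
      have := h_rec (ν+1) (by linarith) t
      rw [show ν+1-1 = ν by ring, show ν+1+1 = ν+2 by ring] at this
      exact this
    have HD := ((Hq.mul Hp).const_mul (2*ν)).add
      ((((hasDerivAt_pow 2 t).div_const 2).mul ((Hq.mul Hr).sub (Hs.mul Hp))))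
    refine HD.congr_deriv ?_
    symm
    simp only [Pi.mul_apply, Pi.sub_apply]
    push_cast
    linear_combination (t * h ν t) * rec1 - (t * h (-ν) t) * rec2
  have hconst := is_const_of_deriv_eq_zero (𝕜 := ℝ)
    (fun t => (hQ t).differentiableAt) (fun t => (hQ t).deriv) z 0
  rw [hconst]
  have hΓν : (0:ℝ) < Real.Gamma ν := Real.Gamma_pos_of_pos h0
  have hΓ1ν : (0:ℝ) < Real.Gamma (1-ν) := Real.Gamma_pos_of_pos (by linarith)
  have hsin : (0:ℝ) < Real.sin (Real.pi * ν) := by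
    apply Real.sin_pos_of_pos_of_lt_pi
    · positivity
    · nlinarith [Real.pi_pos]
  have hrefl : Real.Gamma ν * Real.Gamma (1-ν) = Real.pi / Real.sin (Real.pi * ν) :=
    Real.Gamma_mul_Gamma_one_sub ν
  rw [h_zero, h_zero, h_zero, h_zero]
  rw [show ν + 1 = ν + 1 by ring, Real.Gamma_add_one h0.ne',
      show -ν + 1 = 1 - ν by ring]
  have hπ := Real.pi_pos
  have hrefl' : Real.Gamma ν * Real.Gamma (1-ν) * Real.sin (Real.pi*ν) = Real.pi := by
    rw [hrefl]
    field_simp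
  field_simp
  rw [mul_comm ν Real.pi]
  linear_combination (-4*ν*Real.Gamma (ν+1+1)) * hrefl'

noncomputable def F1 (ν μ : ℝ) (x : ℝ) : ℝ :=
  1/2 * (μ/2 : ℝ) ^ (-(2*ν)) * x ^ (2-2*ν : ℝ) *
    (h (-ν) (μ*x)^2 + ν * (h (-ν) (μ*x) * h (1-ν) (μ*x)) + (μ*x)^2/4 * h (1-ν) (μ*x)^2)

noncomputable def F2 (ν μ : ℝ) (x : ℝ) : ℝ :=
  1/2 * (μ^2*x^2 * (h (-ν) (μ*x) * h ν (μ*x)) - 2*ν^2 * (h (-ν) (μ*x) * h ν (μ*x))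
    + ν*μ^2*x^2/2 * (h (-ν) (μ*x) * h (ν+1) (μ*x) - h (1-ν) (μ*x) * h ν (μ*x))
    + μ^4*x^4/4 * (h (1-ν) (μ*x) * h (ν+1) (μ*x)))

lemma hasDerivAt_hc (σ : ℝ) (hσ : -1 < σ) (μ x : ℝ) :
    HasDerivAt (fun x => h σ (μ*x)) (-(μ*x/2) * h (σ+1) (μ*x) * μ) x := by
  have h2 : HasDerivAt (fun x : ℝ => μ*x) (μ*1) x := (hasDerivAt_id x).const_mul μ
  have := (hasDerivAt_h σ hσ (μ*x)).comp x h2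
  exact this.congr_deriv (by ring)

lemma hasDerivAt_F1 (ν μ : ℝ) (h0 : 0 < ν) (h1 : ν < 1) (x : ℝ) (hx : 0 < x) :
    HasDerivAt (F1 ν μ) (x ^ (1-2*ν : ℝ) * (μ/2 : ℝ) ^ (-(2*ν)) * h (-ν) (μ*x)^2)
      x := by
  have Hp := hasDerivAt_hc (-ν) (by linarith) μ x
  have Hr := hasDerivAt_hc (1-ν) (by linarith) μ x
  rw [show -ν+1 = 1-ν by ring] at Hp
  rw [show 1-ν+1 = 2-ν by ring] at Hr
  have rec1 : h (-ν) (μ*x) + (μ*x/2)^2 * h (2-ν) (μ*x) = (1-ν) * h (1-ν) (μ*x) := by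
    have := h_rec (1-ν) (by linarith) (μ*x)
    rw [show 1-ν-1 = -ν by ring, show 1-ν+1 = 2-ν by ring] at this
    exact this
  have hxr : HasDerivAt (fun x : ℝ => x ^ (2-2*ν : ℝ))
      ((2-2*ν) * x ^ (2-2*ν-1 : ℝ)) x :=
    Real.hasDerivAt_rpow_const (Or.inl hx.ne')
  have hquad : HasDerivAt (fun x : ℝ => (μ*x)^2/4) ((2:ℕ)*(μ*x)^1*(μ*1)/4) x :=
    (((hasDerivAt_id x).const_mul μ).pow 2).div_const 4
  have hG := ((Hp.pow 2).add ((Hp.mul Hr).const_mul ν)).add (hquad.mul (Hr.pow 2))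
  have HD := (hxr.const_mul (1/2 * (μ/2 : ℝ) ^ (-(2*ν)))).mul hG
  have HD' : HasDerivAt (F1 ν μ) (1/2 * (μ/2 : ℝ) ^ (-(2*ν)) *
      ((2-2*ν) * x ^ (2-2*ν-1 : ℝ)) *
      (h (-ν) (μ*x)^2 + ν * (h (-ν) (μ*x) * h (1-ν) (μ*x)) + (μ*x)^2/4 * h (1-ν) (μ*x)^2)
      + 1/2 * (μ/2 : ℝ) ^ (-(2*ν)) * x ^ (2-2*ν : ℝ) *
      (((2:ℕ) * h (-ν) (μ*x) ^ (2-1) * (-(μ*x/2) * h (1-ν) (μ*x) * μ)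
        + ν * ((-(μ*x/2) * h (1-ν) (μ*x) * μ) * h (1-ν) (μ*x)
          + h (-ν) (μ*x) * (-(μ*x/2) * h (2-ν) (μ*x) * μ)))
        + ((2:ℕ)*(μ*x)^1*(μ*1)/4 * h (1-ν) (μ*x)^2
          + (μ*x)^2/4 * ((2:ℕ) * h (1-ν) (μ*x) ^ (2-1) * (-(μ*x/2) * h (2-ν) (μ*x) * μ))))) x := by
    exact HD
  have e1 : x ^ (2-2*ν-1 : ℝ) = x ^ (1-2*ν : ℝ) := by
    rw [show (2:ℝ)-2*ν-1 = 1-2*ν by ring]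
  have e2 : x ^ (2-2*ν : ℝ) = x ^ (1-2*ν : ℝ) * x := by
    rw [show (2:ℝ)-2*ν = (1-2*ν)+1 by ring, Real.rpow_add hx, Real.rpow_one]
  rw [e1, e2] at HD'
  convert HD' using 1
  push_cast
  linear_combination (x ^ (1-2*ν : ℝ) * (μ/2 : ℝ) ^ (-(2*ν)) *
    (ν * h (-ν) (μ*x) + (μ*x)^2/2 * h (1-ν) (μ*x))) * rec1

lemma hasDerivAt_F2 (ν μ : ℝ) (h0 : 0 < ν) (h1 : ν < 1) (x : ℝ) :
    HasDerivAt (F2 ν μ) (μ^2 * x * (h (-ν) (μ*x) * h ν (μ*x))) x := by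
  have Hp := hasDerivAt_hc (-ν) (by linarith) μ x
  have Hq := hasDerivAt_hc ν (by linarith) μ x
  have Hr := hasDerivAt_hc (1-ν) (by linarith) μ x
  have Hs := hasDerivAt_hc (ν+1) (by linarith) μ x
  rw [show -ν+1 = 1-ν by ring] at Hp
  rw [show 1-ν+1 = 2-ν by ring] at Hr
  rw [show ν+1+1 = ν+2 by ring] at Hs
  have rec1 : h (-ν) (μ*x) + (μ*x/2)^2 * h (2-ν) (μ*x) = (1-ν) * h (1-ν) (μ*x) := by
    have := h_rec (1-ν) (by linarith) (μ*x)
    rw [show 1-ν-1 = -ν by ring, show 1-ν+1 = 2-ν by ring] at this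
    exact this
  have rec2 : h ν (μ*x) + (μ*x/2)^2 * h (ν+2) (μ*x) = (ν+1) * h (ν+1) (μ*x) := by
    have := h_rec (ν+1) (by linarith) (μ*x)
    rw [show ν+1-1 = ν by ring, show ν+1+1 = ν+2 by ring] at this
    exact this
  have HT1 := ((hasDerivAt_pow 2 x).const_mul (μ^2)).mul (Hp.mul Hq)
  have HT2 := (Hp.mul Hq).const_mul (2*ν^2)
  have HT3 := (((hasDerivAt_pow 2 x).const_mul (ν*μ^2)).div_const 2).mul
    ((Hp.mul Hs).sub (Hr.mul Hq))
  have HT4 := (((hasDerivAt_pow 4 x).const_mul (μ^4)).div_const 4).mul (Hr.mul Hs)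
  have HD := (((HT1.sub HT2).add HT3).add HT4).const_mul (1/2 : ℝ)
  refine HD.congr_deriv ?_
  symm
  simp only [Pi.mul_apply, Pi.sub_apply]
  push_cast
  linear_combination (-(1/2 : ℝ)*x*μ^2*ν*h ν (μ*x) + (1/4 : ℝ)*x^3*μ^4*h (ν+1) (μ*x)) * rec1
    + ((1/2 : ℝ)*x*μ^2*ν*h (-ν) (μ*x) + (1/4 : ℝ)*x^3*μ^4*h (1-ν) (μ*x)) * rec2

lemma continuous_F1 (ν μ : ℝ) (h0 : 0 < ν) (h1 : ν < 1) : Continuous (F1 ν μ) := by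
  have hrp : Continuous fun x : ℝ => x ^ (2-2*ν : ℝ) :=
    continuous_iff_continuousAt.mpr fun x =>
      Real.continuousAt_rpow_const x _ (Or.inr (by linarith))
  have hc1 : Continuous fun x : ℝ => h (-ν) (μ*x) :=
    (continuous_h (-ν) (by linarith)).comp (continuous_const.mul continuous_id)
  have hc2 : Continuous fun x : ℝ => h (1-ν) (μ*x) :=
    (continuous_h (1-ν) (by linarith)).comp (continuous_const.mul continuous_id)
  exact (continuous_const.mul hrp).mul
    (((hc1.pow 2).add (continuous_const.mul (hc1.mul hc2))).add
      ((((continuous_const.mul continuous_id).pow 2).div_const 4).mul (hc2.pow 2)))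

lemma continuous_F2 (ν μ : ℝ) (h0 : 0 < ν) (h1 : ν < 1) : Continuous (F2 ν μ) := by
  have hc1 : Continuous fun x : ℝ => h (-ν) (μ*x) :=
    (continuous_h (-ν) (by linarith)).comp (continuous_const.mul continuous_id)
  have hc2 : Continuous fun x : ℝ => h (1-ν) (μ*x) :=
    (continuous_h (1-ν) (by linarith)).comp (continuous_const.mul continuous_id)
  have hc3 : Continuous fun x : ℝ => h ν (μ*x) :=
    (continuous_h ν (by linarith)).comp (continuous_const.mul continuous_id)
  have hc4 : Continuous fun x : ℝ => h (ν+1) (μ*x) :=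
    (continuous_h (ν+1) (by linarith)).comp (continuous_const.mul continuous_id)
  exact continuous_const.mul
    (((((continuous_const.mul (continuous_pow 2)).mul (hc1.mul hc3)).sub
      (continuous_const.mul (hc1.mul hc3))).add
      ((((continuous_const.mul (continuous_pow 2)).div_const 2).mul
        ((hc1.mul hc4).sub (hc2.mul hc3))))).add
      (((continuous_const.mul (continuous_pow 4)).div_const 4).mul (hc2.mul hc4)))

lemma F1_zero (ν μ : ℝ) (h1 : ν < 1) : F1 ν μ 0 = 0 := by
  unfold F1
  rw [Real.zero_rpow (by intro hc; · linarith [hc] : (2:ℝ)-2*ν ≠ 0)]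
  ring

lemma F1_one (ν μ : ℝ) : F1 ν μ 1 = 1/2 * (μ/2 : ℝ) ^ (-(2*ν)) *
    (h (-ν) μ^2 + ν * (h (-ν) μ * h (1-ν) μ) + μ^2/4 * h (1-ν) μ^2) := by
  unfold F1
  rw [Real.one_rpow, mul_one, mul_one]

lemma F2_one (ν μ : ℝ) : F2 ν μ 1 = 1/2 * (μ^2 * (h (-ν) μ * h ν μ)
    - 2*ν^2 * (h (-ν) μ * h ν μ)
    + ν*μ^2/2 * (h (-ν) μ * h (ν+1) μ - h (1-ν) μ * h ν μ)
    + μ^4/4 * (h (1-ν) μ * h (ν+1) μ)) := by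
  unfold F2
  norm_num

lemma F2_zero (ν μ : ℝ) (h0 : 0 < ν) (h1 : ν < 1) :
    F2 ν μ 0 = -(ν * Real.sin (Real.pi * ν)) / Real.pi := by
  have hΓν : (0:ℝ) < Real.Gamma ν := Real.Gamma_pos_of_pos h0
  have hΓ1ν : (0:ℝ) < Real.Gamma (1-ν) := Real.Gamma_pos_of_pos (by linarith)
  have hsin : (0:ℝ) < Real.sin (Real.pi * ν) := by
    apply Real.sin_pos_of_pos_of_lt_pi
    · positivity
    · nlinarith [Real.pi_pos]
  have hπ := Real.pi_pos
  have hrefl' : Real.Gamma ν * Real.Gamma (1-ν) * Real.sin (Real.pi*ν) = Real.pi := by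
    rw [Real.Gamma_mul_Gamma_one_sub ν]
    field_simp
  unfold F2
  rw [mul_zero, h_zero, h_zero, show -ν + 1 = 1 - ν by ring,
    Real.Gamma_add_one h0.ne']
  field_simp
  rw [mul_comm ν Real.pi]
  linear_combination (16*ν^2) * hrefl'

lemma final_algebra (ν μ p q r s w sν pi : ℝ) (hp : p ≠ 0) (hw : w ≠ 0) (hμ : μ ≠ 0)
    (hsν : sν ≠ 0) (hpi : pi ≠ 0)
    (hW : 2*ν*(q*p) + (μ^2/2)*(q*r - s*p) = 2*sν/pi) :
    (pi/(2*(-sν)*(p*w⁻¹))) * (-(q*w) * (1/2 * (w^2)⁻¹ *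
        (p^2 + ν*(p*r) + μ^2/4 * r^2))
      + (p*w⁻¹) * ((μ^2)⁻¹ * (1/2 * (μ^2*(p*q) - 2*ν^2*(p*q)
          + ν*μ^2/2*(p*s - r*q) + μ^4/4*(r*s)))))
    - (pi/(2*(-sν)*(p*w⁻¹))) * ((p*w⁻¹) * ((μ^2)⁻¹ * (-(ν*sν)/pi)))
    = (r * ((μ/2) * w⁻¹)) / (2*μ*(p*w⁻¹)) := by
  rw [eq_div_iff hpi] at hW
  field_simp
  linear_combination (8*p*ν + 4*r*μ^2) * hW

end BesselAux

open BesselAux in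
theorem stmt12 (g : ℝ) (hg1 : 1/2 < g) (hg2 : g < 3/2) (hg3 : g ≠ 1)
    (μ : ℝ) (hμ : 0 < μ) (hJ : besselJ (1/2 - g) μ ≠ 0)
    (γN : ℝ) (hγN : γN = Real.pi / (2 * Real.cos (g * Real.pi) * besselJ (1/2 - g) μ)) :
    ∫ x in Ioc (0:ℝ) 1, γN * x *
        (-(besselJ (g - 1/2) μ) * besselJ (1/2 - g) (μ * x)^2 +
          besselJ (1/2 - g) μ * besselJ (1/2 - g) (μ * x) * besselJ (g - 1/2) (μ * x)) =
      besselJ (3/2 - g) μ / (2 * μ * besselJ (1/2 - g) μ) := by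
  set ν : ℝ := g - 1/2 with hνdef
  have hν0 : 0 < ν := by rw [hνdef]; linarith
  have hν1 : ν < 1 := by rw [hνdef]; linarith
  have e1 : (1:ℝ)/2 - g = -ν := by rw [hνdef]; ring
  have e2 : (3:ℝ)/2 - g = 1 - ν := by rw [hνdef]; ring
  rw [e1] at hJ hγN
  rw [e1, e2]
  have hμ2 : (0:ℝ) < μ/2 := by linarith
  have hπ := Real.pi_pos
  have hsin : 0 < Real.sin (Real.pi * ν) :=
    Real.sin_pos_of_pos_of_lt_pi (by positivity) (by nlinarith)
  have hcos : Real.cos (g * Real.pi) = - Real.sin (Real.pi * ν) := by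
    rw [show g * Real.pi = ν * Real.pi + Real.pi/2 by rw [hνdef]; ring,
      Real.cos_add_pi_div_two, mul_comm]
  have hw0 : (0:ℝ) < (μ/2 : ℝ) ^ (ν:ℝ) := Real.rpow_pos_of_pos hμ2 ν
  set w : ℝ := (μ/2 : ℝ) ^ (ν:ℝ) with hwdef
  have hBm : besselJ (-ν) μ = h (-ν) μ * w⁻¹ := by
    rw [besselJ_eq, Real.rpow_neg hμ2.le, ← hwdef]
  have hBp : besselJ ν μ = h ν μ * w := by rw [besselJ_eq, ← hwdef]
  have hB1 : besselJ (1-ν) μ = h (1-ν) μ * ((μ/2) * w⁻¹) := by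
    rw [besselJ_eq, show (1:ℝ)-ν = 1 + -ν by ring, Real.rpow_add hμ2, Real.rpow_one,
      Real.rpow_neg hμ2.le, ← hwdef]
  have hphalf : h (-ν) μ ≠ 0 := by
    intro hc; apply hJ; rw [hBm, hc, zero_mul]
  have hcc : (μ/2 : ℝ) ^ (-(2*ν) : ℝ) = (w^2)⁻¹ := by
    rw [Real.rpow_neg hμ2.le, show (2:ℝ)*ν = ν*2 by ring, Real.rpow_mul hμ2.le,
      ← hwdef, Real.rpow_two]
  have hsq : ∀ x : ℝ, 0 < x → besselJ (-ν) (μ * x)^2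
      = (μ/2 : ℝ) ^ (-(2*ν) : ℝ) * x ^ (-(2*ν) : ℝ) * h (-ν) (μ*x)^2 := by
    intro x hx
    have hx2 : (0:ℝ) < μ*x/2 := by positivity
    rw [besselJ_eq, mul_pow, ← Real.rpow_natCast ((μ*x/2 : ℝ) ^ (-ν:ℝ)) 2,
      ← Real.rpow_mul hx2.le]
    rw [show (-ν) * ((2:ℕ):ℝ) = -(2*ν) by push_cast; ring]
    rw [show μ*x/2 = (μ/2)*x by ring, Real.mul_rpow hμ2.le hx.le]
    ring
  have hpq : ∀ x : ℝ, 0 < x → besselJ (-ν) (μ*x) * besselJ ν (μ*x)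
      = h (-ν) (μ*x) * h ν (μ*x) := by
    intro x hx
    have hx2 : (0:ℝ) < μ*x/2 := by positivity
    rw [besselJ_eq, besselJ_eq]
    have hone : (μ*x/2 : ℝ) ^ (-ν:ℝ) * (μ*x/2 : ℝ) ^ (ν:ℝ) = 1 := by
      rw [← Real.rpow_add hx2]
      norm_num
    calc h (-ν) (μ*x) * (μ*x/2:ℝ)^(-ν:ℝ) * (h ν (μ*x) * (μ*x/2:ℝ)^(ν:ℝ))
        = h (-ν) (μ*x) * h ν (μ*x) * ((μ*x/2:ℝ)^(-ν:ℝ) * (μ*x/2:ℝ)^(ν:ℝ)) := by ring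
      _ = h (-ν) (μ*x) * h ν (μ*x) := by rw [hone, mul_one]
  rw [← intervalIntegral.integral_of_le (zero_le_one)]
  have hμ2ne : (μ:ℝ)^2 ≠ 0 := pow_ne_zero 2 hμ.ne'
  have hinv : ((μ:ℝ)^2)⁻¹ * μ^2 = 1 := inv_mul_cancel₀ hμ2ne
  set F : ℝ → ℝ := fun x => γN * (-(besselJ ν μ) * F1 ν μ x
      + besselJ (-ν) μ * ((μ^2)⁻¹ * F2 ν μ x)) with hFdef
  have hFTC : (∫ x in (0:ℝ)..1, γN * x * (-(besselJ ν μ) * besselJ (-ν) (μ*x)^2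
      + besselJ (-ν) μ * besselJ (-ν) (μ*x) * besselJ ν (μ*x))) = F 1 - F 0 := by
    apply intervalIntegral.integral_eq_sub_of_hasDeriv_right_of_le zero_le_one
    · apply Continuous.continuousOn
      exact continuous_const.mul ((continuous_const.mul (continuous_F1 ν μ hν0 hν1)).add
        (continuous_const.mul (continuous_const.mul (continuous_F2 ν μ hν0 hν1))))
    · intro x hx
      apply HasDerivAt.hasDerivWithinAt
      have H1 := hasDerivAt_F1 ν μ hν0 hν1 x hx.1
      have H2 := hasDerivAt_F2 ν μ hν0 hν1 x
      have HD := ((H1.const_mul (-(besselJ ν μ))).add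
        ((H2.const_mul ((μ^2)⁻¹)).const_mul (besselJ (-ν) μ))).const_mul γN
      refine HD.congr_deriv ?_
      symm
      rw [hsq x hx.1, mul_assoc (besselJ (-ν) μ), hpq x hx.1]
      have hxpow : x ^ (-(2*ν):ℝ) * x = x ^ ((1:ℝ)-2*ν) := by
        rw [show (1:ℝ)-2*ν = -(2*ν) + 1 by ring, Real.rpow_add hx.1, Real.rpow_one]
      linear_combination (γN * (-(besselJ ν μ)) * (μ/2 : ℝ) ^ (-(2*ν) : ℝ)
          * h (-ν) (μ*x)^2) * hxpow
        - (γN * besselJ (-ν) μ * x * (h (-ν) (μ*x) * h ν (μ*x))) * hinv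
    · rw [intervalIntegrable_iff_integrableOn_Ioc_of_le zero_le_one]
      set ψ : ℝ → ℝ := fun x => γN * (-(besselJ ν μ) * ((μ/2:ℝ)^(-(2*ν):ℝ) * h (-ν) (μ*x)^2)
          + besselJ (-ν) μ * (h (-ν) (μ*x) * h ν (μ*x)) * x ^ (2*ν : ℝ)) with hψdef
      have hψc : Continuous ψ := by
        have hrp : Continuous fun x : ℝ => x ^ (2*ν : ℝ) :=
          continuous_iff_continuousAt.mpr fun x =>
            Real.continuousAt_rpow_const x _ (Or.inr (by linarith))
        have hc1 : Continuous fun x : ℝ => h (-ν) (μ*x) :=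
          (continuous_h (-ν) (by linarith)).comp (continuous_const.mul continuous_id)
        have hc3 : Continuous fun x : ℝ => h ν (μ*x) :=
          (continuous_h ν (by linarith)).comp (continuous_const.mul continuous_id)
        exact continuous_const.mul ((continuous_const.mul
          (continuous_const.mul (hc1.pow 2))).add
          ((continuous_const.mul (hc1.mul hc3)).mul hrp))
      have hrint : IntegrableOn (fun x : ℝ => x ^ ((1:ℝ)-2*ν)) (Icc (0:ℝ) 1) volume :=
        (intervalIntegrable_iff_integrableOn_Icc_of_le zero_le_one).mp
          (intervalIntegral.intervalIntegrable_rpow' (by linarith))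
      have hprod : IntegrableOn (fun x : ℝ => x ^ ((1:ℝ)-2*ν) * ψ x) (Icc (0:ℝ) 1) volume :=
        hrint.mul_continuousOn hψc.continuousOn isCompact_Icc
      apply ((hprod.mono_set Ioc_subset_Icc_self).congr_fun ?_ measurableSet_Ioc)
      intro x hx
      simp only [hψdef]
      rw [hsq x hx.1, mul_assoc (besselJ (-ν) μ) (besselJ (-ν) (μ*x)), hpq x hx.1]
      have hx21 : x ^ ((1:ℝ)-2*ν) * x ^ (2*ν:ℝ) = x := by
        rw [← Real.rpow_add hx.1]
        norm_num
      have hxpow : x ^ (-(2*ν):ℝ) * x = x ^ ((1:ℝ)-2*ν) := by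
        rw [show (1:ℝ)-2*ν = -(2*ν) + 1 by ring, Real.rpow_add hx.1, Real.rpow_one]
      linear_combination (γN * besselJ ν μ * (μ/2:ℝ)^(-(2*ν):ℝ) * h (-ν) (μ*x)^2) * hxpow
        + (γN * besselJ (-ν) μ * (h (-ν) (μ*x) * h ν (μ*x))) * hx21
  rw [hFTC, hFdef]
  simp only [F1_one, F1_zero ν μ hν1, F2_one, F2_zero ν μ hν0 hν1, mul_zero, zero_add, add_zero]
  rw [hγN, hcos, hBm, hBp, hB1, hcc]
  exact final_algebra ν μ (h (-ν) μ) (h ν μ) (h (1-ν) μ) (h (ν+1) μ) w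
    (Real.sin (Real.pi*ν)) Real.pi hphalf hw0.ne' hμ.ne' hsin.ne' hπ.ne'
    (wronskian ν hν0 hν1 μ)
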